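/- Let a, b, c ∈ ℂ∖{0} and let L = {(x,y) ∈ (ℂ∖{0})² : a·x + b·y = c}. Set v = (log|c| − log|a|, log|c| − log|b|) ∈ ℝ². Then Log(L) ⊆ U_{2 log 2}(Γ_v) and Γ_v ⊆ U_{4 log 2}(Log(L)). -/

import Mathlib

/-- Coordinate-wise logarithm of moduli, `Log(z)_i = log |z_i|`. -/
noncomputable def LogMap {n : ℕ} (z : Fin n → ℂ) : Fin n → ℝ :=
  fun i => Real.log (‖z i‖)

/-- Open ε-neighbourhood of a set with respect to the sup norm on `Fin n → ℝ`. -/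
def nbhd {n : ℕ} (ε : ℝ) (X : Set (Fin n → ℝ)) : Set (Fin n → ℝ) :=
  {y | ∃ x ∈ X, ‖y - x‖ < ε}

/-- Ray emanating from `v` in direction `d`. -/
def ray {n : ℕ} (v d : Fin n → ℝ) : Set (Fin n → ℝ) :=
  {x | ∃ t : ℝ, 0 ≤ t ∧ x = v + t • d}

/-- Standard tropical line in `ℝ²` with vertex `v`: three rays in directions
`(-1,0)`, `(0,-1)` and `(1,1)`. -/
noncomputable def stdTropLine (v : Fin 2 → ℝ) : Set (Fin 2 → ℝ) :=
  ray v ![-1, 0] ∪ ray v ![0, -1] ∪ ray v ![1, 1]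

lemma log_abs_eq (u w z : ℂ) (hu : u ≠ 0) (hw : w ≠ 0) (hz : z ≠ 0) :
    Real.log (‖u * w / z‖) =
      Real.log (‖u‖) + Real.log (‖w‖) - Real.log (‖z‖) := by
  rw [norm_div, norm_mul,
    Real.log_div (mul_ne_zero (norm_ne_zero_iff.mpr hu) (norm_ne_zero_iff.mpr hw))
      (norm_ne_zero_iff.mpr hz),
    Real.log_mul (norm_ne_zero_iff.mpr hu) (norm_ne_zero_iff.mpr hw)]

lemma key' (p q : ℝ) (hp : 0 < p) (hq : 0 < q) (hpq : 1 ≤ p + q) (h2 : q ≤ p + 1)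
    (hle : p ≤ q) :
    ∃ α β : ℝ,
      ((∃ t : ℝ, 0 ≤ t ∧ α = -t ∧ β = 0) ∨ (∃ t : ℝ, 0 ≤ t ∧ α = 0 ∧ β = -t) ∨
        (∃ t : ℝ, 0 ≤ t ∧ α = t ∧ β = t)) ∧
      |Real.log p - α| ≤ Real.log 2 ∧ |Real.log q - β| ≤ Real.log 2 := by
  have hl2 : (0:ℝ) ≤ Real.log 2 := Real.log_nonneg (by norm_num)
  rcases le_or_gt q 2 with hq2 | hq2
  · refine ⟨min (Real.log p) 0, 0,
      Or.inl ⟨-(min (Real.log p) 0), by simp [min_le_right], by ring, rfl⟩, ?_, ?_⟩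
    · rcases le_total (Real.log p) 0 with h | h
      · simp [min_eq_left h, hl2]
      · rw [min_eq_right h]
        rw [sub_zero, abs_of_nonneg h]
        calc Real.log p ≤ Real.log q := Real.log_le_log hp hle
          _ ≤ Real.log 2 := Real.log_le_log hq hq2
    · rw [sub_zero]
      rw [abs_le]
      constructor
      · have hhalf : (1:ℝ)/2 ≤ q := by linarith
        have h := Real.log_le_log (by norm_num : (0:ℝ) < 1/2) hhalf
        rw [show (1:ℝ)/2 = 2⁻¹ by norm_num, Real.log_inv] at h
        linarith
      · exact Real.log_le_log hq hq2
  · refine ⟨Real.log q, Real.log q,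
      Or.inr (Or.inr ⟨Real.log q, Real.log_nonneg (by linarith), rfl, rfl⟩), ?_, by simp [hl2]⟩
    have hq2p : q ≤ 2 * p := by linarith
    have h1 : Real.log q ≤ Real.log 2 + Real.log p := by
      calc Real.log q ≤ Real.log (2 * p) := Real.log_le_log hq hq2p
        _ = Real.log 2 + Real.log p := Real.log_mul two_ne_zero (ne_of_gt hp)
    have h3 : Real.log p ≤ Real.log q := Real.log_le_log hp hle
    rw [abs_of_nonpos (by linarith)]
    linarith

lemma key (p q : ℝ) (hp : 0 < p) (hq : 0 < q) (hpq : 1 ≤ p + q) (h1 : p ≤ q + 1)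
    (h2 : q ≤ p + 1) :
    ∃ α β : ℝ,
      ((∃ t : ℝ, 0 ≤ t ∧ α = -t ∧ β = 0) ∨ (∃ t : ℝ, 0 ≤ t ∧ α = 0 ∧ β = -t) ∨
        (∃ t : ℝ, 0 ≤ t ∧ α = t ∧ β = t)) ∧
      |Real.log p - α| ≤ Real.log 2 ∧ |Real.log q - β| ≤ Real.log 2 := by
  rcases le_total p q with hle | hle
  · exact key' p q hp hq hpq h2 hle
  · obtain ⟨α, β, hd, hα, hβ⟩ := key' q p hq hp (by linarith) h1 hle
    refine ⟨β, α, ?_, hβ, hα⟩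
    rcases hd with ⟨t, ht, h₁, h₂⟩ | ⟨t, ht, h₁, h₂⟩ | ⟨t, ht, h₁, h₂⟩
    · exact Or.inr (Or.inl ⟨t, ht, h₂, h₁⟩)
    · exact Or.inl ⟨t, ht, h₂, h₁⟩
    · exact Or.inr (Or.inr ⟨t, ht, h₂, h₁⟩)


lemma mem_amoeba (a b c : ℂ) (ha : a ≠ 0) (hb : b ≠ 0) (hc : c ≠ 0) (X Y : ℂ)
    (hX : X ≠ 0) (hY : Y ≠ 0) (hXY : X + Y = 1) :
    ![Real.log (‖c‖) - Real.log (‖a‖) + Real.log (‖X‖),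
      Real.log (‖c‖) - Real.log (‖b‖) + Real.log (‖Y‖)]
      ∈ LogMap '' {p : Fin 2 → ℂ | p 0 ≠ 0 ∧ p 1 ≠ 0 ∧ a * p 0 + b * p 1 = c} := by
  refine ⟨![c * X / a, c * Y / b], ⟨?_, ?_, ?_⟩, ?_⟩
  · simpa using div_ne_zero (mul_ne_zero hc hX) ha
  · simpa using div_ne_zero (mul_ne_zero hc hY) hb
  · have h1 : a * (c * X / a) = c * X := by field_simp
    have h2 : b * (c * Y / b) = c * Y := by field_simp
    simp only [Matrix.cons_val_zero, Matrix.cons_val_one, Matrix.head_cons]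
    rw [h1, h2, show c * X + c * Y = c * (X + Y) by ring, hXY, mul_one]
  · funext i
    fin_cases i
    · show Real.log (‖c * X / a‖) = _
      rw [log_abs_eq c X a hc hX ha]
      simp only [Fin.zero_eta, Matrix.cons_val_zero]; ring
    · show Real.log (‖c * Y / b‖) = _
      rw [log_abs_eq c Y b hc hY hb]
      simp only [Fin.mk_one, Matrix.cons_val_one, Matrix.head_cons, Matrix.cons_val_zero]; ring

/-- For `a, b, c ∈ ℂ∖{0}` and the line `L = {ax + by = c}` in `(ℂ*)²`,
with `v = (log|c| - log|a|, log|c| - log|b|)`, the amoeba of `L` lies in the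
`2 log 2`-neighbourhood of the tropical line `Γ_v`, and `Γ_v` lies in the
`4 log 2`-neighbourhood of the amoeba. -/
theorem stmt_2 (a b c : ℂ) (ha : a ≠ 0) (hb : b ≠ 0) (hc : c ≠ 0) :
    LogMap '' {p : Fin 2 → ℂ | p 0 ≠ 0 ∧ p 1 ≠ 0 ∧ a * p 0 + b * p 1 = c}
        ⊆ nbhd (2 * Real.log 2)
          (stdTropLine ![Real.log (‖c‖) - Real.log (‖a‖),
                         Real.log (‖c‖) - Real.log (‖b‖)]) ∧
    stdTropLine ![Real.log (‖c‖) - Real.log (‖a‖),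
                  Real.log (‖c‖) - Real.log (‖b‖)]
        ⊆ nbhd (4 * Real.log 2)
          (LogMap '' {p : Fin 2 → ℂ | p 0 ≠ 0 ∧ p 1 ≠ 0 ∧ a * p 0 + b * p 1 = c}) := by
  have hl2 : (0:ℝ) < Real.log 2 := Real.log_pos one_lt_two
  set v0 := Real.log (‖c‖) - Real.log (‖a‖) with hv0
  set v1 := Real.log (‖c‖) - Real.log (‖b‖) with hv1
  constructor
  · rintro y ⟨p, ⟨hp0, hp1, hsum⟩, rfl⟩
    set X := a * p 0 / c with hXdef
    set Y := b * p 1 / c with hYdef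
    have hX : X ≠ 0 := div_ne_zero (mul_ne_zero ha hp0) hc
    have hY : Y ≠ 0 := div_ne_zero (mul_ne_zero hb hp1) hc
    have hXY : X + Y = 1 := by
      rw [hXdef, hYdef, ← add_div, hsum, div_self hc]
    have h1 : 1 ≤ ‖X‖ + ‖Y‖ := by
      have : ‖X + Y‖ = 1 := by rw [hXY]; simp
      calc (1:ℝ) = ‖X + Y‖ := this.symm
        _ ≤ _ := norm_add_le X Y
    have h2 : ‖X‖ ≤ ‖Y‖ + 1 := by
      have hx1 : X = 1 - Y := by linear_combination hXY
      calc ‖X‖ = ‖1 + -Y‖ := by rw [hx1]; ring_nf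
        _ ≤ ‖1‖ + ‖-Y‖ := norm_add_le 1 (-Y)
        _ = ‖Y‖ + 1 := by simp [add_comm]
    have h3 : ‖Y‖ ≤ ‖X‖ + 1 := by
      have hy1 : Y = 1 - X := by linear_combination hXY
      calc ‖Y‖ = ‖1 + -X‖ := by rw [hy1]; ring_nf
        _ ≤ ‖1‖ + ‖-X‖ := norm_add_le 1 (-X)
        _ = ‖X‖ + 1 := by simp [add_comm]
    obtain ⟨α, β, hd, hα, hβ⟩ := key (‖X‖) (‖Y‖)
      (norm_pos_iff.mpr hX) (norm_pos_iff.mpr hY) h1 h2 h3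
    have eX : Real.log (‖X‖) =
        Real.log (‖a‖) + Real.log (‖p 0‖) - Real.log (‖c‖) := by
      rw [hXdef]; exact log_abs_eq a (p 0) c ha hp0 hc
    have eY : Real.log (‖Y‖) =
        Real.log (‖b‖) + Real.log (‖p 1‖) - Real.log (‖c‖) := by
      rw [hYdef]; exact log_abs_eq b (p 1) c hb hp1 hc
    refine ⟨![v0 + α, v1 + β], ?_, ?_⟩
    · rcases hd with ⟨t, ht, hα', hβ'⟩ | ⟨t, ht, hα', hβ'⟩ | ⟨t, ht, hα', hβ'⟩
      · refine Or.inl (Or.inl ⟨t, ht, ?_⟩)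
        funext i; fin_cases i <;>
          simp [hα', hβ', Matrix.cons_val_zero, Matrix.cons_val_one, Matrix.head_cons]
      · refine Or.inl (Or.inr ⟨t, ht, ?_⟩)
        funext i; fin_cases i <;>
          simp [hα', hβ', Matrix.cons_val_zero, Matrix.cons_val_one, Matrix.head_cons]
      · refine Or.inr ⟨t, ht, ?_⟩
        funext i; fin_cases i <;>
          simp [hα', hβ', Matrix.cons_val_zero, Matrix.cons_val_one, Matrix.head_cons]
    · rw [pi_norm_lt_iff (by linarith)]
      intro i; fin_cases i
      · show ‖Real.log (‖p 0‖) - (v0 + α)‖ < 2 * Real.log 2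
        rw [Real.norm_eq_abs,
          show Real.log (‖p 0‖) - (v0 + α) = Real.log (‖X‖) - α by
            rw [eX, hv0]; ring]
        exact lt_of_le_of_lt hα (by linarith)
      · show ‖Real.log (‖p 1‖) - (v1 + β)‖ < 2 * Real.log 2
        rw [Real.norm_eq_abs,
          show Real.log (‖p 1‖) - (v1 + β) = Real.log (‖Y‖) - β by
            rw [eY, hv1]; ring]
        exact lt_of_le_of_lt hβ (by linarith)
  · rintro γ ((⟨t, ht, rfl⟩ | ⟨t, ht, rfl⟩) | ⟨t, ht, rfl⟩)
    · -- ray in direction (-1,0)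
      have hep := Real.exp_pos (-t)
      have he : Real.exp (-t) ≤ 1 := by
        rw [show (1:ℝ) = Real.exp 0 by simp]; exact Real.exp_le_exp.mpr (by linarith)
      set X : ℂ := ((-(Real.exp (-t)) : ℝ) : ℂ) with hXd
      set Y : ℂ := ((1 + Real.exp (-t) : ℝ) : ℂ) with hYd
      have hX : X ≠ 0 := Complex.ofReal_ne_zero.mpr (neg_ne_zero.mpr (ne_of_gt hep))
      have hY : Y ≠ 0 := Complex.ofReal_ne_zero.mpr (by positivity)
      have hXY : X + Y = 1 := by rw [hXd, hYd, ← Complex.ofReal_add]; norm_num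
      have habsX : ‖X‖ = Real.exp (-t) := by
        rw [hXd, Complex.norm_real, Real.norm_eq_abs, abs_neg, abs_of_pos hep]
      have habsY : ‖Y‖ = 1 + Real.exp (-t) := by
        rw [hYd, Complex.norm_real, Real.norm_eq_abs, abs_of_pos (by linarith)]
      have hY1 : 0 ≤ Real.log (1 + Real.exp (-t)) := Real.log_nonneg (by linarith)
      have hY2 : Real.log (1 + Real.exp (-t)) ≤ Real.log 2 :=
        Real.log_le_log (by linarith) (by linarith)
      refine ⟨_, mem_amoeba a b c ha hb hc X Y hX hY hXY, ?_⟩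
      rw [pi_norm_lt_iff (by linarith)]
      intro i; fin_cases i
      · show ‖v0 + t * (-1) - (v0 + Real.log (‖X‖))‖ < 4 * Real.log 2
        rw [Real.norm_eq_abs, habsX, Real.log_exp, abs_lt]
        constructor <;> linarith
      · show ‖v1 + t * 0 - (v1 + Real.log (‖Y‖))‖ < 4 * Real.log 2
        rw [Real.norm_eq_abs, habsY, abs_lt]
        constructor <;> linarith
    · -- ray in direction (0,-1)
      have hep := Real.exp_pos (-t)
      have he : Real.exp (-t) ≤ 1 := by
        rw [show (1:ℝ) = Real.exp 0 by simp]; exact Real.exp_le_exp.mpr (by linarith)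
      set X : ℂ := ((1 + Real.exp (-t) : ℝ) : ℂ) with hXd
      set Y : ℂ := ((-(Real.exp (-t)) : ℝ) : ℂ) with hYd
      have hX : X ≠ 0 := Complex.ofReal_ne_zero.mpr (by positivity)
      have hY : Y ≠ 0 := Complex.ofReal_ne_zero.mpr (neg_ne_zero.mpr (ne_of_gt hep))
      have hXY : X + Y = 1 := by rw [hXd, hYd, ← Complex.ofReal_add]; norm_num
      have habsX : ‖X‖ = 1 + Real.exp (-t) := by
        rw [hXd, Complex.norm_real, Real.norm_eq_abs, abs_of_pos (by linarith)]
      have habsY : ‖Y‖ = Real.exp (-t) := by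
        rw [hYd, Complex.norm_real, Real.norm_eq_abs, abs_neg, abs_of_pos hep]
      have hX1 : 0 ≤ Real.log (1 + Real.exp (-t)) := Real.log_nonneg (by linarith)
      have hX2 : Real.log (1 + Real.exp (-t)) ≤ Real.log 2 :=
        Real.log_le_log (by linarith) (by linarith)
      refine ⟨_, mem_amoeba a b c ha hb hc X Y hX hY hXY, ?_⟩
      rw [pi_norm_lt_iff (by linarith)]
      intro i; fin_cases i
      · show ‖v0 + t * 0 - (v0 + Real.log (‖X‖))‖ < 4 * Real.log 2
        rw [Real.norm_eq_abs, habsX, abs_lt]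
        constructor <;> linarith
      · show ‖v1 + t * (-1) - (v1 + Real.log (‖Y‖))‖ < 4 * Real.log 2
        rw [Real.norm_eq_abs, habsY, Real.log_exp, abs_lt]
        constructor <;> linarith
    · -- ray in direction (1,1)
      have hep := Real.exp_pos t
      have he : 1 ≤ Real.exp t := by
        rw [show (1:ℝ) = Real.exp 0 by simp]; exact Real.exp_le_exp.mpr ht
      set X : ℂ := ((-(Real.exp t) : ℝ) : ℂ) with hXd
      set Y : ℂ := ((1 + Real.exp t : ℝ) : ℂ) with hYd
      have hX : X ≠ 0 := Complex.ofReal_ne_zero.mpr (neg_ne_zero.mpr (ne_of_gt hep))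
      have hY : Y ≠ 0 := Complex.ofReal_ne_zero.mpr (by positivity)
      have hXY : X + Y = 1 := by rw [hXd, hYd, ← Complex.ofReal_add]; norm_num
      have habsX : ‖X‖ = Real.exp t := by
        rw [hXd, Complex.norm_real, Real.norm_eq_abs, abs_neg, abs_of_pos hep]
      have habsY : ‖Y‖ = 1 + Real.exp t := by
        rw [hYd, Complex.norm_real, Real.norm_eq_abs, abs_of_pos (by linarith)]
      have hY1 : t ≤ Real.log (1 + Real.exp t) := by
        calc t = Real.log (Real.exp t) := (Real.log_exp t).symm
          _ ≤ _ := Real.log_le_log hep (by linarith)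
      have hY2 : Real.log (1 + Real.exp t) ≤ Real.log 2 + t := by
        calc Real.log (1 + Real.exp t) ≤ Real.log (2 * Real.exp t) :=
              Real.log_le_log (by linarith) (by linarith)
          _ = Real.log 2 + t := by
              rw [Real.log_mul two_ne_zero (ne_of_gt hep), Real.log_exp]
      refine ⟨_, mem_amoeba a b c ha hb hc X Y hX hY hXY, ?_⟩
      rw [pi_norm_lt_iff (by linarith)]
      intro i; fin_cases i
      · show ‖v0 + t * 1 - (v0 + Real.log (‖X‖))‖ < 4 * Real.log 2
        rw [Real.norm_eq_abs, habsX, Real.log_exp, abs_lt]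
        constructor <;> linarith
      · show ‖v1 + t * 1 - (v1 + Real.log (‖Y‖))‖ < 4 * Real.log 2
        rw [Real.norm_eq_abs, habsY, abs_lt]
        constructor <;> linarith
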